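/- Contraction Lemma (Lemma 3.1): Under Assumption (K) on the kernel k, for every λ∈ℂ and every T>0 the operator R_λ maps B_b([0,T],ℂ) into itself, is Lipschitz continuous in the supremum norm, and there exists n_T∈ℕ such that the n_T-th power R_λ^{n_T} is a strict contraction on B_b([0,T],ℂ) (i.e., has Lipschitz constant strictly less than 1 with respect to the supremum norm). -/

import Mathlib

open MeasureTheory Filter
open Set


lemma myHolder {p q : ℝ} (hpq : Real.HolderConjugate p q)
    {t : ℝ} {f w : ℝ → ℝ}
    (hf : Measurable f) (hf0 : ∀ s, 0 ≤ f s)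
    (hw : Measurable w) (hw0 : ∀ s, 0 ≤ w s)
    (hfp : IntegrableOn (fun s => f s ^ p) (Set.Ioc 0 t))
    (hwq : IntegrableOn (fun s => w s ^ q) (Set.Ioc 0 t)) :
    IntegrableOn (fun s => f s * w s) (Set.Ioc 0 t) ∧
    ∫ s in Set.Ioc (0:ℝ) t, f s * w s ≤
      (∫ s in Set.Ioc (0:ℝ) t, f s ^ p) ^ (1/p) *
      (∫ s in Set.Ioc (0:ℝ) t, w s ^ q) ^ (1/q) := by
  set μ := volume.restrict (Set.Ioc (0:ℝ) t) with hμ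
  have hfm : AEMeasurable (fun s => ENNReal.ofReal (f s)) μ :=
    (ENNReal.measurable_ofReal.comp hf).aemeasurable
  have hwm : AEMeasurable (fun s => ENNReal.ofReal (w s)) μ :=
    (ENNReal.measurable_ofReal.comp hw).aemeasurable
  have key := ENNReal.lintegral_mul_le_Lp_mul_Lq μ hpq hfm hwm
  have hI0 : 0 ≤ ∫ s, f s ^ p ∂μ := integral_nonneg fun s => Real.rpow_nonneg (hf0 s) p
  have hJ0 : 0 ≤ ∫ s, w s ^ q ∂μ := integral_nonneg fun s => Real.rpow_nonneg (hw0 s) q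
  have hA : ∫⁻ s, (ENNReal.ofReal (f s)) ^ p ∂μ = ENNReal.ofReal (∫ s, f s ^ p ∂μ) := by
    rw [ofReal_integral_eq_lintegral_ofReal hfp
      (ae_of_all _ fun s => Real.rpow_nonneg (hf0 s) p)]
    exact lintegral_congr fun s => ENNReal.ofReal_rpow_of_nonneg (hf0 s) hpq.nonneg
  have hB : ∫⁻ s, (ENNReal.ofReal (w s)) ^ q ∂μ = ENNReal.ofReal (∫ s, w s ^ q ∂μ) := by
    rw [ofReal_integral_eq_lintegral_ofReal hwq
      (ae_of_all _ fun s => Real.rpow_nonneg (hw0 s) q)]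
    exact lintegral_congr fun s => ENNReal.ofReal_rpow_of_nonneg (hw0 s) hpq.symm.nonneg
  rw [hA, hB] at key
  have hkey2 : ∫⁻ s, ENNReal.ofReal (f s * w s) ∂μ ≤
      ENNReal.ofReal ((∫ s, f s ^ p ∂μ) ^ (1/p) * (∫ s, w s ^ q ∂μ) ^ (1/q)) := by
    calc ∫⁻ s, ENNReal.ofReal (f s * w s) ∂μ
        = ∫⁻ s, (fun s => ENNReal.ofReal (f s)) s * (fun s => ENNReal.ofReal (w s)) s ∂μ := by
          exact lintegral_congr fun s => ENNReal.ofReal_mul (hf0 s)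
      _ ≤ _ := key
      _ = _ := by
          rw [ENNReal.ofReal_mul (Real.rpow_nonneg hI0 _),
            ← ENNReal.ofReal_rpow_of_nonneg hI0 hpq.one_div_nonneg,
            ← ENNReal.ofReal_rpow_of_nonneg hJ0 hpq.symm.one_div_nonneg]
  have hmeas : AEStronglyMeasurable (fun s => f s * w s) μ :=
    (hf.mul hw).aestronglyMeasurable
  have hint : Integrable (fun s => f s * w s) μ := by
    refine ⟨hmeas, ?_⟩
    rw [hasFiniteIntegral_iff_norm]
    calc ∫⁻ s, ENNReal.ofReal ‖f s * w s‖ ∂μ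
        = ∫⁻ s, ENNReal.ofReal (f s * w s) ∂μ := by
          exact lintegral_congr fun s => by
            rw [Real.norm_of_nonneg (mul_nonneg (hf0 s) (hw0 s))]
      _ ≤ _ := hkey2
      _ < ⊤ := ENNReal.ofReal_lt_top
  refine ⟨hint, ?_⟩
  rw [integral_eq_lintegral_of_nonneg_ae (ae_of_all _ fun s => mul_nonneg (hf0 s) (hw0 s)) hmeas]
  calc (∫⁻ s, ENNReal.ofReal (f s * w s) ∂μ).toReal
      ≤ (ENNReal.ofReal ((∫ s, f s ^ p ∂μ) ^ (1/p) * (∫ s, w s ^ q ∂μ) ^ (1/q))).toReal :=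
        ENNReal.toReal_mono ENNReal.ofReal_ne_top hkey2
    _ = _ := ENNReal.toReal_ofReal (mul_nonneg (Real.rpow_nonneg hI0 _) (Real.rpow_nonneg hJ0 _))

open intervalIntegral in
lemma myWeight {t r : ℝ} (ht : 0 < t) (hr : 0 ≤ r) :
    IntegrableOn (fun s => |s| ^ r) (Set.Ioc 0 t) ∧
    ∫ s in Set.Ioc (0:ℝ) t, |s| ^ r = t ^ (r+1) / (r+1) := by
  have heq : Set.EqOn (fun s : ℝ => s ^ r) (fun s => |s| ^ r) (Set.Ioc 0 t) := by
    intro s hs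
    simp only []
    rw [abs_of_pos hs.1]
  have hii : IntervalIntegrable (fun s : ℝ => s ^ r) volume 0 t :=
    intervalIntegral.intervalIntegrable_rpow (Or.inl hr)
  have hio : IntegrableOn (fun s : ℝ => s ^ r) (Set.Ioc 0 t) := by
    rw [intervalIntegrable_iff_integrableOn_Ioc_of_le ht.le] at hii
    exact hii
  constructor
  · exact hio.congr_fun heq measurableSet_Ioc
  · rw [← setIntegral_congr_fun measurableSet_Ioc heq]
    rw [← integral_of_le ht.le]
    rw [integral_rpow (Or.inl (by linarith))]
    rw [Real.zero_rpow (by linarith : r + 1 ≠ 0)]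
    ring

lemma myKernelEst {p q α KT : ℝ} (hpq : Real.HolderConjugate p q) {k : ℝ → ℝ → ℝ}
    (hkm : Measurable (Function.uncurry k))
    {t : ℝ} (ht : 0 < t) (hα : α ≤ 1)
    (hInt : IntegrableOn (fun s => |k t s| ^ p) (Set.Ioc 0 t))
    (hKb : (∫ s in Set.Ioc (0:ℝ) t, |k t s| ^ p) ^ (1/p) ≤ KT * t ^ (1/p - α))
    {β : ℝ} (hβ : 0 ≤ β) (hKT0 : 0 ≤ KT) :
    IntegrableOn (fun s => |k t s| * |s| ^ β) (Set.Ioc 0 t) ∧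
    ∫ s in Set.Ioc (0:ℝ) t, |k t s| * |s| ^ β ≤
      KT * t ^ (1 - α + β) * (β * q + 1) ^ (-(1/q)) := by
  have hq0 : 0 < q := hpq.symm.pos
  have hw : Measurable (fun s : ℝ => |s| ^ β) :=
    (measurable_id.abs).pow_const _
  have hwq : IntegrableOn (fun s : ℝ => (|s| ^ β) ^ q) (Set.Ioc 0 t) := by
    have := (myWeight ht (mul_nonneg hβ hq0.le)).1
    refine this.congr_fun (fun s _ => ?_) measurableSet_Ioc
    rw [← Real.rpow_mul (abs_nonneg s)]
  have hfm : Measurable (fun s => |k t s|) := (hkm.of_uncurry_left).abs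
  obtain ⟨hint, hbound⟩ := myHolder hpq hfm (fun s => abs_nonneg _) hw
    (fun s => Real.rpow_nonneg (abs_nonneg _) _) hInt hwq
  refine ⟨hint, hbound.trans ?_⟩
  have hJval : ∫ s in Set.Ioc (0:ℝ) t, (|s| ^ β) ^ q = t ^ (β*q+1) / (β*q+1) := by
    rw [show (fun s : ℝ => (|s| ^ β) ^ q) = fun s : ℝ => |s| ^ (β*q) from
      funext fun s => by rw [← Real.rpow_mul (abs_nonneg s)]]
    exact (myWeight ht (mul_nonneg hβ hq0.le)).2
  rw [hJval]
  have hbq1 : (0:ℝ) < β * q + 1 := by positivity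
  have hJr : (t ^ (β*q+1) / (β*q+1)) ^ (1/q) =
      t ^ (β + 1/q) * (β*q+1) ^ (-(1/q)) := by
    rw [Real.div_rpow (Real.rpow_nonneg ht.le _) hbq1.le,
      ← Real.rpow_mul ht.le, Real.rpow_neg hbq1.le, div_eq_mul_inv]
    congr 2
    field_simp
  rw [hJr]
  calc (∫ s in Set.Ioc (0:ℝ) t, |k t s| ^ p) ^ (1/p) * (t ^ (β + 1/q) * (β*q+1) ^ (-(1/q)))
      ≤ (KT * t ^ (1/p - α)) * (t ^ (β + 1/q) * (β*q+1) ^ (-(1/q))) := by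
        apply mul_le_mul_of_nonneg_right hKb
        positivity
    _ = KT * t ^ (1 - α + β) * (β * q + 1) ^ (-(1/q)) := by
        rw [show KT * t ^ (1/p - α) * (t ^ (β + 1/q) * (β*q+1) ^ (-(1/q))) =
          KT * (t ^ (1/p - α) * t ^ (β + 1/q)) * (β*q+1) ^ (-(1/q)) by ring,
          ← Real.rpow_add ht]
        have hc := hpq.inv_add_inv_eq_one
        rw [inv_eq_one_div, inv_eq_one_div] at hc
        rw [show 1/p - α + (β + 1/q) = 1 - α + β by linarith]

-- operator estimate: given kernel integrability+bound facts (as produced by myKernelEst),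
-- bound the norm of the complex integral against a weight bound on d.
lemma myOpEst {t B C' β : ℝ} {kk : ℝ → ℝ} {d : ℝ → ℂ}
    (hint : IntegrableOn (fun s => |kk s| * |s| ^ β) (Set.Ioc 0 t))
    (hb : ∫ s in Set.Ioc (0:ℝ) t, |kk s| * |s| ^ β ≤ B)
    (hC' : 0 ≤ C')
    (hdb : ∀ s ∈ Set.Ioc (0:ℝ) t, ‖d s‖ ≤ C' * s ^ β) :
    ‖∫ s in Set.Ioc (0:ℝ) t, (kk s : ℂ) * d s‖ ≤ C' * B := by
  have hBnn : (0:ℝ) ≤ B := le_trans (integral_nonneg fun s => by positivity) hb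
  calc ‖∫ s in Set.Ioc (0:ℝ) t, (kk s : ℂ) * d s‖
      ≤ ∫ s in Set.Ioc (0:ℝ) t, ‖(kk s : ℂ) * d s‖ := norm_integral_le_integral_norm _
    _ ≤ ∫ s in Set.Ioc (0:ℝ) t, C' * (|kk s| * |s| ^ β) := by
        apply integral_mono_of_nonneg (ae_of_all _ fun s => norm_nonneg _)
          (hint.const_mul C')
        rw [EventuallyLE, ae_restrict_iff' measurableSet_Ioc]
        refine ae_of_all _ fun s hs => ?_
        have h1 : ‖(kk s : ℂ) * d s‖ = |kk s| * ‖d s‖ := by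
          rw [norm_mul, Complex.norm_real, Real.norm_eq_abs]
        rw [h1]
        have h2 : ‖d s‖ ≤ C' * |s| ^ β := by
          rw [abs_of_pos hs.1]; exact hdb s hs
        calc |kk s| * ‖d s‖ ≤ |kk s| * (C' * |s| ^ β) :=
              mul_le_mul_of_nonneg_left h2 (abs_nonneg _)
          _ = C' * (|kk s| * |s| ^ β) := by ring
    _ = C' * ∫ s in Set.Ioc (0:ℝ) t, |kk s| * |s| ^ β := by rw [integral_const_mul]
    _ ≤ C' * B := mul_le_mul_of_nonneg_left hb hC'

-- measurability of the Volterra integral as a function of t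
lemma myMeasInt {k : ℝ → ℝ → ℝ} (hkm : Measurable (Function.uncurry k))
    {g : ℝ → ℂ} (hg : Measurable g) :
    Measurable (fun t => ∫ s in Set.Ioc (0:ℝ) t, (k t s : ℂ) * g s) := by
  have hΦ : StronglyMeasurable (fun ts : ℝ × ℝ =>
      if 0 < ts.2 ∧ ts.2 ≤ ts.1 then (k ts.1 ts.2 : ℂ) * g ts.2 else 0) := by
    apply Measurable.stronglyMeasurable
    refine Measurable.ite ?_ ?_ measurable_const
    · exact MeasurableSet.inter
        (measurableSet_lt measurable_const measurable_snd)
        (measurableSet_le measurable_snd measurable_fst)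
    · exact (Complex.measurable_ofReal.comp hkm).mul (hg.comp measurable_snd)
  have hmes := StronglyMeasurable.integral_prod_right' (ν := (volume : Measure ℝ)) hΦ
  have heq : (fun t => ∫ s in Set.Ioc (0:ℝ) t, (k t s : ℂ) * g s) =
      fun t => ∫ s, (fun ts : ℝ × ℝ =>
        if 0 < ts.2 ∧ ts.2 ≤ ts.1 then (k ts.1 ts.2 : ℂ) * g ts.2 else 0) (t, s) := by
    funext t
    rw [← integral_indicator measurableSet_Ioc]
    congr 1
    funext s
    simp only [Set.indicator_apply, Set.mem_Ioc]
  rw [heq]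
  exact hmes.measurable

lemma myProdLt {a : ℕ → ℝ} (h0 : ∀ j, 0 ≤ a j)
    (hlim : Filter.Tendsto a Filter.atTop (nhds 0)) :
    ∃ n, ∏ j ∈ Finset.range n, a j < 1 := by
  have hev : ∀ᶠ j in Filter.atTop, a j < 1/2 := by
    have := hlim.eventually (eventually_lt_nhds (by norm_num : (0:ℝ) < 1/2))
    exact this
  obtain ⟨J, hJ⟩ := Filter.eventually_atTop.mp hev
  set B := ∏ j ∈ Finset.range J, a j with hB
  have hB0 : 0 ≤ B := Finset.prod_nonneg fun j _ => h0 j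
  have hpow : Filter.Tendsto (fun m : ℕ => B * (1/2 : ℝ) ^ m) Filter.atTop (nhds 0) := by
    have := tendsto_pow_atTop_nhds_zero_of_lt_one (by norm_num : (0:ℝ) ≤ 1/2)
      (by norm_num : (1/2:ℝ) < 1)
    simpa using this.const_mul B
  obtain ⟨m, hm⟩ := (hpow.eventually (eventually_lt_nhds (by norm_num : (0:ℝ) < 1))).exists
  refine ⟨J + m, ?_⟩
  rw [Finset.prod_range_add]
  calc B * ∏ x ∈ Finset.range m, a (J + x)
      ≤ B * (1/2) ^ m := by
        apply mul_le_mul_of_nonneg_left _ hB0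
        calc ∏ x ∈ Finset.range m, a (J + x)
            ≤ ∏ _x ∈ Finset.range m, (1/2 : ℝ) :=
              Finset.prod_le_prod (fun j _ => h0 _)
                (fun j _ => (hJ _ (Nat.le_add_right J j)).le)
          _ = (1/2) ^ m := by rw [Finset.prod_const, Finset.card_range]
    _ < 1 := hm

noncomputable section

def AssumptionK (k : ℝ → ℝ → ℝ) : Prop :=
  Measurable (Function.uncurry k) ∧
  ∃ α ε : ℝ, 0 ≤ α ∧ α < 1 ∧ 0 < ε ∧
    ∀ T : ℝ, 0 < T → ∃ KT : ℝ,
      ∀ t : ℝ, 0 < t → t ≤ T →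
        MeasureTheory.IntegrableOn (fun s => |k t s| ^ (1 + ε)) (Set.Ioc 0 t) ∧
        t ^ (α - 1 / (1 + ε)) *
          (∫ s in Set.Ioc (0:ℝ) t, |k t s| ^ (1 + ε)) ^ (1 / (1 + ε)) ≤ KT

noncomputable def Rop (k : ℝ → ℝ → ℝ) (lam : ℂ) (g : ℝ → ℂ) : ℝ → ℂ :=
  fun t => if 0 < t then 1 - lam * ∫ s in Set.Ioc (0:ℝ) t, (k t s : ℂ) * g s else 1

def BddBorelOn (T : ℝ) (g : ℝ → ℂ) : Prop :=
  Measurable g ∧ ∃ M : ℝ, ∀ t ∈ Set.Icc (0:ℝ) T, ‖g t‖ ≤ M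

theorem stmt2 (k : ℝ → ℝ → ℝ) (hk : AssumptionK k) (lam : ℂ) (T : ℝ) (hT : 0 < T) :
    (∀ g : ℝ → ℂ, BddBorelOn T g → BddBorelOn T (Rop k lam g)) ∧
    (∃ L : ℝ, 0 ≤ L ∧ ∀ f g : ℝ → ℂ, BddBorelOn T f → BddBorelOn T g →
      ∀ C : ℝ, 0 ≤ C → (∀ s ∈ Set.Icc (0:ℝ) T, ‖g s - f s‖ ≤ C) →
      ∀ t ∈ Set.Icc (0:ℝ) T, ‖Rop k lam g t - Rop k lam f t‖ ≤ L * C) ∧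
    (∃ nT : ℕ, ∃ q : ℝ, 0 ≤ q ∧ q < 1 ∧
      ∀ f g : ℝ → ℂ, BddBorelOn T f → BddBorelOn T g →
      ∀ C : ℝ, 0 ≤ C → (∀ s ∈ Set.Icc (0:ℝ) T, ‖g s - f s‖ ≤ C) →
      ∀ t ∈ Set.Icc (0:ℝ) T,
        ‖(Rop k lam)^[nT] g t - (Rop k lam)^[nT] f t‖ ≤ q * C) := by
  obtain ⟨hkm, α, ε, hα0, hα1, hε, hKTall⟩ := hk
  obtain ⟨KT, hKT⟩ := hKTall T hT
  set p := 1 + ε with hp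
  set q := (1 + ε)/ε with hqdef
  have hp1 : 1 < p := by rw [hp]; linarith
  have hpq : p.HolderConjugate q := by
    have h := Real.HolderConjugate.conjExponent hp1
    have heq : Real.conjExponent p = q := by
      rw [Real.conjExponent, hqdef, hp]
      norm_num
    rwa [heq] at h
  have hq0 : 0 < q := hpq.symm.pos
  have h1α : (0:ℝ) < 1 - α := by linarith
  have hKT0 : 0 ≤ KT := by
    refine le_trans ?_ (hKT T hT le_rfl).2
    exact mul_nonneg (Real.rpow_nonneg hT.le _)
      (Real.rpow_nonneg (integral_nonneg fun s => Real.rpow_nonneg (abs_nonneg _) _) _)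
  have hKb : ∀ t, 0 < t → t ≤ T →
      (∫ s in Set.Ioc (0:ℝ) t, |k t s| ^ p) ^ (1/p) ≤ KT * t ^ (1/p - α) := by
    intro t ht htT
    have h := (hKT t ht htT).2
    have h2 := mul_le_mul_of_nonneg_left h (Real.rpow_nonneg ht.le (1/p - α))
    rw [← mul_assoc, ← Real.rpow_add ht] at h2
    rw [show 1/p - α + (α - 1/p) = 0 by ring, Real.rpow_zero, one_mul] at h2
    rw [mul_comm]
    exact h2
  have hEst : ∀ t, 0 < t → t ≤ T → ∀ β : ℝ, 0 ≤ β →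
      IntegrableOn (fun s => |k t s| * |s| ^ β) (Set.Ioc 0 t) ∧
      ∫ s in Set.Ioc (0:ℝ) t, |k t s| * |s| ^ β ≤
        KT * t ^ (1 - α + β) * (β * q + 1) ^ (-(1/q)) :=
    fun t ht htT β hβ =>
      myKernelEst hpq hkm ht hα1.le (hKT t ht htT).1 (hKb t ht htT) hβ hKT0
  set c : ℝ → ℝ := fun β => (β * q + 1) ^ (-(1/q)) with hc
  have hc0 : ∀ β : ℝ, 0 ≤ β → 0 ≤ c β := fun β hβ =>
    Real.rpow_nonneg (by positivity) _
  -- Part 1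
  have part1 : ∀ g, BddBorelOn T g → BddBorelOn T (Rop k lam g) := by
    rintro g ⟨hgm, M, hM⟩
    constructor
    · unfold Rop
      exact Measurable.ite measurableSet_Ioi
        (measurable_const.sub ((myMeasInt hkm hgm).const_mul lam)) measurable_const
    · have hM'0 : 0 ≤ max M 0 := le_max_right M 0
      refine ⟨1 + ‖lam‖ * (max M 0 * (KT * T ^ (1 - α + 0) * c 0)), ?_⟩
      intro t htI
      unfold Rop
      by_cases ht : 0 < t
      · rw [if_pos ht]
        have hE := hEst t ht htI.2 0 le_rfl
        have hdb : ∀ s ∈ Set.Ioc (0:ℝ) t, ‖g s‖ ≤ max M 0 * s ^ (0:ℝ) := by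
          intro s hs
          rw [Real.rpow_zero, mul_one]
          exact le_trans (hM s ⟨hs.1.le, hs.2.trans htI.2⟩) (le_max_left M 0)
        have hnorm := myOpEst hE.1 hE.2 hM'0 hdb
        have hmono : max M 0 * (KT * t ^ (1 - α + 0) * c 0) ≤
            max M 0 * (KT * T ^ (1 - α + 0) * c 0) := by
          apply mul_le_mul_of_nonneg_left _ hM'0
          apply mul_le_mul_of_nonneg_right _ (hc0 0 le_rfl)
          exact mul_le_mul_of_nonneg_left
            (Real.rpow_le_rpow ht.le htI.2 (by linarith)) hKT0
        calc ‖1 - lam * ∫ s in Set.Ioc (0:ℝ) t, (k t s : ℂ) * g s‖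
            ≤ ‖(1:ℂ)‖ + ‖lam * ∫ s in Set.Ioc (0:ℝ) t, (k t s : ℂ) * g s‖ :=
              norm_sub_le _ _
          _ ≤ 1 + ‖lam‖ * (max M 0 * (KT * T ^ (1 - α + 0) * c 0)) := by
              rw [norm_one, norm_mul]
              exact add_le_add_right (mul_le_mul_of_nonneg_left
                (hnorm.trans hmono) (norm_nonneg lam)) 1
      · rw [if_neg ht, norm_one]
        have : 0 ≤ ‖lam‖ * (max M 0 * (KT * T ^ (1 - α + 0) * c 0)) := by
          apply mul_nonneg (norm_nonneg _)
          apply mul_nonneg hM'0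
          apply mul_nonneg (mul_nonneg hKT0 (Real.rpow_nonneg hT.le _)) (hc0 0 le_rfl)
        linarith
  have hRzero : ∀ h : ℝ → ℂ, Rop k lam h 0 = 1 := fun h => by
    simp only [Rop, lt_irrefl, if_false, if_neg]
  have bddIter : ∀ n (g : ℝ → ℂ), BddBorelOn T g → BddBorelOn T ((Rop k lam)^[n] g) := by
    intro n
    induction n with
    | zero => intro g hg; simpa using hg
    | succ n ih =>
      intro g hg
      rw [Function.iterate_succ_apply']
      exact part1 _ (ih g hg)
  set D : ℕ → ℝ := fun n => ∏ j ∈ Finset.range n, (‖lam‖ * KT * c ((j:ℝ) * (1 - α))) with hD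
  have hD0 : ∀ n, 0 ≤ D n := fun n => Finset.prod_nonneg fun j _ =>
    mul_nonneg (mul_nonneg (norm_nonneg _) hKT0)
      (hc0 _ (mul_nonneg (Nat.cast_nonneg j) h1α.le))
  have hDsucc : ∀ n, D (n+1) = D n * (‖lam‖ * KT * c ((n:ℝ) * (1 - α))) := fun n =>
    Finset.prod_range_succ _ n
  -- main iterate claim
  have claim : ∀ n (f g : ℝ → ℂ), BddBorelOn T f → BddBorelOn T g → ∀ C : ℝ, 0 ≤ C →
      (∀ s ∈ Set.Icc (0:ℝ) T, ‖g s - f s‖ ≤ C) →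
      ∀ t ∈ Set.Icc (0:ℝ) T, ‖(Rop k lam)^[n] g t - (Rop k lam)^[n] f t‖ ≤
        C * D n * t ^ ((n:ℝ) * (1 - α)) := by
    intro n
    induction n with
    | zero =>
      intro f g hf hg C hC hfg t htI
      simp only [Function.iterate_zero, id_eq, Nat.cast_zero, zero_mul, Real.rpow_zero]
      have : D 0 = 1 := Finset.prod_range_zero _
      rw [this, mul_one, mul_one]
      exact hfg t htI
    | succ n ih =>
      intro f g hf hg C hC hfg t htI
      rw [Function.iterate_succ_apply', Function.iterate_succ_apply']
      obtain ⟨hGm, MG, hMG⟩ := bddIter n g hg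
      obtain ⟨hFm, MF, hMF⟩ := bddIter n f hf
      by_cases ht : 0 < t
      · have hβnn : (0:ℝ) ≤ (n:ℝ) * (1 - α) := mul_nonneg (Nat.cast_nonneg n) h1α.le
        have hE0 := hEst t ht htI.2 0 le_rfl
        have hkint : IntegrableOn (fun s => |k t s|) (Set.Ioc 0 t) := by
          have h := hE0.1
          simpa [Real.rpow_zero] using h
        have hintOf : ∀ (G : ℝ → ℂ) (MG : ℝ), Measurable G →
            (∀ s ∈ Set.Icc (0:ℝ) T, ‖G s‖ ≤ MG) →
            IntegrableOn (fun s => (k t s : ℂ) * G s) (Set.Ioc 0 t) := by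
          intro G MG hGm hMG
          apply Integrable.mono' (hkint.const_mul (max MG 0))
          · exact ((Complex.measurable_ofReal.comp
              hkm.of_uncurry_left).mul hGm).aestronglyMeasurable
          · rw [ae_restrict_iff' measurableSet_Ioc]
            refine ae_of_all _ fun s hs => ?_
            rw [norm_mul, Complex.norm_real, Real.norm_eq_abs]
            calc |k t s| * ‖G s‖ ≤ |k t s| * max MG 0 :=
                mul_le_mul_of_nonneg_left
                  ((hMG s ⟨hs.1.le, hs.2.trans htI.2⟩).trans (le_max_left _ _))
                  (abs_nonneg _)
              _ = max MG 0 * |k t s| := mul_comm _ _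
        have hintG := hintOf _ MG hGm hMG
        have hintF := hintOf _ MF hFm hMF
        have hsub : Rop k lam ((Rop k lam)^[n] g) t - Rop k lam ((Rop k lam)^[n] f) t
            = -(lam * ∫ s in Set.Ioc (0:ℝ) t,
                (k t s : ℂ) * ((Rop k lam)^[n] g s - (Rop k lam)^[n] f s)) := by
          simp only [Rop, if_pos ht]
          have heq : (fun s => (k t s : ℂ) * ((Rop k lam)^[n] g s - (Rop k lam)^[n] f s))
              = fun s => (k t s : ℂ) * (Rop k lam)^[n] g s
                  - (k t s : ℂ) * (Rop k lam)^[n] f s :=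
            funext fun s => mul_sub _ _ _
          rw [heq, integral_sub hintG hintF]
          ring
        rw [hsub, norm_neg, norm_mul]
        have hE := hEst t ht htI.2 ((n:ℝ) * (1 - α)) hβnn
        have hdb : ∀ s ∈ Set.Ioc (0:ℝ) t,
            ‖(Rop k lam)^[n] g s - (Rop k lam)^[n] f s‖ ≤
              (C * D n) * s ^ ((n:ℝ) * (1 - α)) := by
          intro s hs
          have h := ih f g hf hg C hC hfg s ⟨hs.1.le, hs.2.trans htI.2⟩
          rw [mul_assoc] at h ⊢
          exact h
        have hnorm := myOpEst hE.1 hE.2 (mul_nonneg hC (hD0 n)) hdb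
        calc ‖lam‖ * ‖∫ s in Set.Ioc (0:ℝ) t,
              (k t s : ℂ) * ((Rop k lam)^[n] g s - (Rop k lam)^[n] f s)‖
            ≤ ‖lam‖ * ((C * D n) *
                (KT * t ^ (1 - α + (n:ℝ) * (1 - α)) * c ((n:ℝ) * (1 - α)))) :=
              mul_le_mul_of_nonneg_left hnorm (norm_nonneg _)
          _ = C * D (n+1) * t ^ (((n:ℕ)+1 : ℝ) * (1 - α)) := by
              rw [hDsucc n,
                show ((n:ℕ)+1 : ℝ) * (1 - α) = 1 - α + (n:ℝ) * (1 - α) by push_cast; ring]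
              ring
          _ = C * D (n+1) * t ^ ((((n:ℕ)+1 : ℕ):ℝ) * (1 - α)) := by push_cast; ring_nf
      · have ht0 : t = 0 := le_antisymm (not_lt.mp ht) htI.1
        rw [ht0, hRzero, hRzero, sub_self, norm_zero]
        have : (0:ℝ) ≤ (0:ℝ) ^ ((((n:ℕ)+1:ℕ):ℝ) * (1 - α)) := Real.rpow_nonneg le_rfl _
        have h2 : 0 ≤ C * D (n+1) := mul_nonneg hC (hD0 _)
        positivity
  refine ⟨part1, ⟨D 1 * T ^ ((1:ℝ) * (1 - α)),
    mul_nonneg (hD0 1) (Real.rpow_nonneg hT.le _), ?_⟩, ?_⟩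
  · intro f g hf hg C hC hfg t htI
    have h := claim 1 f g hf hg C hC hfg t htI
    simp only [Function.iterate_one, Nat.cast_one] at h
    calc ‖Rop k lam g t - Rop k lam f t‖ ≤ C * D 1 * t ^ ((1:ℝ) * (1 - α)) := h
      _ ≤ C * D 1 * T ^ ((1:ℝ) * (1 - α)) := by
          apply mul_le_mul_of_nonneg_left
            (Real.rpow_le_rpow htI.1 htI.2 (by linarith))
            (mul_nonneg hC (hD0 1))
      _ = D 1 * T ^ ((1:ℝ) * (1 - α)) * C := by ring
  · set a : ℕ → ℝ := fun j => ‖lam‖ * KT * c ((j:ℝ) * (1 - α)) * T ^ (1 - α) with ha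
    have ha0 : ∀ j, 0 ≤ a j := fun j =>
      mul_nonneg (mul_nonneg (mul_nonneg (norm_nonneg _) hKT0)
        (hc0 _ (mul_nonneg (Nat.cast_nonneg j) h1α.le))) (Real.rpow_nonneg hT.le _)
    have halim : Filter.Tendsto a Filter.atTop (nhds 0) := by
      have h1 : Filter.Tendsto (fun j : ℕ => ((j:ℝ) * (1 - α)) * q + 1)
          Filter.atTop Filter.atTop := by
        apply Filter.tendsto_atTop_add_const_right
        have : (fun j : ℕ => ((j:ℝ) * (1 - α)) * q) =
            fun j : ℕ => (j:ℝ) * ((1 - α) * q) := funext fun j => by ring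
        rw [this]
        exact (tendsto_natCast_atTop_atTop).atTop_mul_const (by positivity)
      have h2 : Filter.Tendsto (fun j : ℕ => c ((j:ℝ) * (1 - α)))
          Filter.atTop (nhds 0) := by
        have := (tendsto_rpow_neg_atTop (by positivity : (0:ℝ) < 1/q)).comp h1
        exact this
      have h3 := (h2.const_mul (‖lam‖ * KT)).mul_const (T ^ (1 - α))
      simpa using h3
    obtain ⟨n, hn⟩ := myProdLt ha0 halim
    have hprod : ∀ m : ℕ, D m * T ^ ((m:ℝ) * (1 - α)) = ∏ j ∈ Finset.range m, a j := by
      intro m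
      induction m with
      | zero => simp [hD]
      | succ m ihm =>
        rw [Finset.prod_range_succ, ← ihm, hDsucc,
          show ((m+1:ℕ):ℝ) * (1 - α) = (m:ℝ) * (1 - α) + (1 - α) by push_cast; ring,
          Real.rpow_add hT]
        ring
    refine ⟨n, ∏ j ∈ Finset.range n, a j,
      Finset.prod_nonneg (fun j _ => ha0 j), hn, ?_⟩
    intro f g hf hg C hC hfg t htI
    have h := claim n f g hf hg C hC hfg t htI
    calc ‖(Rop k lam)^[n] g t - (Rop k lam)^[n] f t‖
        ≤ C * D n * t ^ ((n:ℝ) * (1 - α)) := h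
      _ ≤ C * D n * T ^ ((n:ℝ) * (1 - α)) :=
          mul_le_mul_of_nonneg_left
            (Real.rpow_le_rpow htI.1 htI.2 (mul_nonneg (Nat.cast_nonneg n) h1α.le))
            (mul_nonneg hC (hD0 n))
      _ = (∏ j ∈ Finset.range n, a j) * C := by rw [mul_assoc, hprod n, mul_comm]
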